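/- Assume h ∘ h ∘ h = 0, g₀(h(Y), Y) = 0, h(h(X₀)) = 0, g₀(h(X₀), X₀) = 0, and g₀(h(Y), h(Y)) ≠ 0. Then for every z ∈ V one has g₀(h(Y), h(Y)) · h(z) = g₀(h(h(Y)), z) · h(Y) + g₀(h(Y), z) · h(h(Y)); in other words, ᵉh = (1/g₀(Υ,Υ)) · (Υ ⊗ (ᵉh²(Y))♭ + ᵉh²(Y) ⊗ Υ♭) where Υ := h(Y). -/

import Mathlib

/-- Decomposition of an index-3 nilpotent electromagnetic potential when
`g₀(h Y, h Y) ≠ 0`: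
`g₀(hY, hY) • h z = g₀(h²Y, z) • hY + g₀(hY, z) • h²Y` for every `z`. -/
theorem stmt4 {V : Type*} [AddCommGroup V] [Module ℝ V] [FiniteDimensional ℝ V]
    (g₀ : V →ₗ[ℝ] V →ₗ[ℝ] ℝ) (hg₀symm : ∀ u v : V, g₀ u v = g₀ v u)
    (h : V →ₗ[ℝ] V) (hsymm : ∀ u v : V, g₀ (h u) v = g₀ u (h v))
    (Y X₀ : V) (hYY : g₀ Y Y = -1) (hXX : g₀ X₀ X₀ = -1) (hYX : g₀ Y X₀ = 0)
    (hpos : ∀ w : V, w ≠ 0 → g₀ w Y = 0 → g₀ w X₀ = 0 → 0 < g₀ w w)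
    (hnil : h ∘ₗ (h ∘ₗ h) = 0)
    (hhYY : g₀ (h Y) Y = 0) (hhhX : h (h X₀) = 0) (hhXX : g₀ (h X₀) X₀ = 0)
    (hne : g₀ (h Y) (h Y) ≠ 0) :
    ∀ z : V, g₀ (h Y) (h Y) • h z = g₀ (h (h Y)) z • h Y + g₀ (h Y) z • h (h Y) := by
  have h3 : ∀ v : V, h (h (h v)) = 0 := fun v => by
    simpa using LinearMap.congr_fun hnil v
  have hN : ∀ v : V, g₀ v Y = 0 → g₀ v X₀ = 0 → g₀ v v = 0 → v = 0 := by
    intro v h1 h2 h0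
    by_contra hv
    exact (hpos v hv h1 h2).ne' h0
  set c : ℝ := g₀ (h Y) (h Y) with hc
  set a : ℝ := g₀ (h Y) X₀ with ha
  -- basic identities
  have gY_hY : g₀ Y (h Y) = 0 := (hg₀symm Y (h Y)).trans hhYY
  have gY_h2Y : g₀ Y (h (h Y)) = c := (hsymm Y (h Y)).symm
  have ghY_h2Y : g₀ (h Y) (h (h Y)) = 0 := by
    rw [hsymm, h3, map_zero]
  have gX_hY : g₀ X₀ (h Y) = a := hg₀symm X₀ (h Y)
  have gY_hX : g₀ Y (h X₀) = a := (hsymm Y X₀).symm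
  have ghY_hX : g₀ (h Y) (h X₀) = 0 := by
    rw [hsymm, hhhX, map_zero]
  have gX_hX : g₀ X₀ (h X₀) = 0 := (hg₀symm X₀ (h X₀)).trans hhXX
  -- Lemma A : h² vanishes on K := {hY, h²Y}ᗮ
  have hA : ∀ k : V, g₀ k (h Y) = 0 → g₀ k (h (h Y)) = 0 → h (h k) = 0 := by
    intro k hk1 hk2
    apply hN
    · rw [hsymm, hsymm]; exact hk2
    · rw [hsymm, hsymm, hhhX, map_zero]
    · rw [hsymm, h3, map_zero]
  set b : ℝ := g₀ (h (h Y)) X₀ with hb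
  have gX_h2Y : g₀ X₀ (h (h Y)) = b := hg₀symm X₀ (h (h Y))
  -- the special vector kX
  set kX : V := X₀ - (b / c) • Y - (a / c) • h Y with hkX
  have hkX1 : g₀ kX (h Y) = 0 := by
    simp only [hkX, map_sub, map_smul, LinearMap.sub_apply, LinearMap.smul_apply,
      smul_eq_mul, gX_hY, gY_hY, ← hc]
    field_simp
    ring
  have hkX2 : g₀ kX (h (h Y)) = 0 := by
    simp only [hkX, map_sub, map_smul, LinearMap.sub_apply, LinearMap.smul_apply,
      smul_eq_mul, gX_h2Y, gY_h2Y, ghY_h2Y]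
    field_simp
    ring
  -- b = 0
  have hkX2nil : h (h kX) = -((b / c) • h (h Y)) := by
    simp [hkX, map_sub, map_smul, hhhX, h3]
  have hb0 : b = 0 := by
    have h0 : (b / c) • h (h Y) = 0 := by
      have := hA kX hkX1 hkX2
      rw [hkX2nil] at this
      simpa using this
    rcases smul_eq_zero.mp h0 with h1 | h1
    · field_simp at h1; simpa using h1
    · rw [hb, h1, map_zero, LinearMap.zero_apply]
  -- g₀ kX (h X₀) = 0
  have hkXm : g₀ kX (h X₀) = 0 := by
    simp only [hkX, map_sub, map_smul, LinearMap.sub_apply, LinearMap.smul_apply,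
      smul_eq_mul, gX_hX, gY_hX, ghY_hX, hb0]
    ring
  -- h kX = 0
  have hkX0 : h kX = 0 := by
    apply hN
    · rw [hsymm]; exact hkX1
    · rw [hsymm]; exact hkXm
    · rw [hsymm, hA kX hkX1 hkX2, map_zero]
  -- hence h X₀ = (a/c) • h²Y
  have hhX0 : h X₀ = (a / c) • h (h Y) := by
    have e : h kX = h X₀ - (b / c) • h Y - (a / c) • h (h Y) := by
      simp [hkX, map_sub, map_smul]
    rw [hkX0, hb0] at e
    simp only [zero_div, zero_smul, sub_zero] at e
    exact (sub_eq_zero.mp e.symm)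
  -- Lemma B : h vanishes on K
  have hB : ∀ k : V, g₀ k (h Y) = 0 → g₀ k (h (h Y)) = 0 → h k = 0 := by
    intro k hk1 hk2
    apply hN
    · rw [hsymm]; exact hk1
    · rw [hsymm, hhX0, map_smul, smul_eq_mul, hk2, mul_zero]
    · rw [hsymm, hA k hk1 hk2, map_zero]
  -- final decomposition
  intro z
  set p : ℝ := g₀ (h (h Y)) z with hp
  set q : ℝ := g₀ (h Y) z with hq
  have hzk : h (z - (p / c) • Y - (q / c) • h Y) = 0 := by
    apply hB
    · simp only [map_sub, map_smul, LinearMap.sub_apply, LinearMap.smul_apply,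
        smul_eq_mul, gY_hY, ← hc]
      rw [hg₀symm z (h Y), ← hq]
      field_simp
      ring
    · simp only [map_sub, map_smul, LinearMap.sub_apply, LinearMap.smul_apply,
        smul_eq_mul, gY_h2Y, ghY_h2Y]
      rw [hg₀symm z (h (h Y)), ← hp]
      field_simp
      ring
  have hz : h z = (p / c) • h Y + (q / c) • h (h Y) := by
    have : h z - (p / c) • h Y - (q / c) • h (h Y) = 0 := by
      simpa [map_sub, map_smul] using hzk
    linear_combination (norm := module) this
  rw [hz, smul_add, smul_smul, smul_smul, mul_div_cancel₀ _ hne, mul_div_cancel₀ _ hne]
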